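/- (Equation (2): the symbolic WCET over-approximates the concrete WCET.) Assume the extended-domain setup with the over-approximation hypothesis. Fix a finite set I of initial extended states, an extended state t₀ with s₀ ⊑ t₀ and t₀(pc) = s₀(pc) for every s₀ ∈ I, and a set F of final pc-values; let L_I^F(P) be the set of traces of runs of P starting from some state of I and whose last state s_n satisfies s_n(pc) ∈ F, and let L⊥(P) be the set of traces of runs of P from t₀ whose last state satisfies the same final condition. Then L_I^F(P) ⊆ L⊥(P); consequently, for every function time assigning a natural number to each trace, if L_I^F(P) is nonempty and L⊥(P) is finite, then WCET(P) ≤ WCET⊥(P), where WCET(P) is the maximum of time over L_I^F(P) and WCET⊥(P) is the maximum of time over L⊥(P). -/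

import Mathlib

/-- The trace language of runs of `Q` starting from a state of `I` and ending in a
state whose `pc`-value lies in `F` (extended-domain states `Var → Option D`). -/
def TraceLangFrom {Var D LI : Type} (pc : Var) (lbl : LI → Option D)
    (step : LI → (Var → Option D) → (Var → Option D) → Prop)
    (refs : LI → (Var → Option D) → Finset D)
    (exec : LI → (Var → Option D) → Bool)
    (Q : Finset LI) (I : Set (Var → Option D)) (F : Set (Option D)) :
    Set (List (LI × Finset D × Bool)) :=
  {w | ∃ (k : ℕ) (states : ℕ → Var → Option D) (instrs : ℕ → LI),
    (∀ j < k, instrs j ∈ Q ∧ lbl (instrs j) = states j pc ∧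
      step (instrs j) (states j) (states (j + 1))) ∧
    states 0 ∈ I ∧ states k pc ∈ F ∧
    w = List.ofFn (fun j : Fin k =>
      (instrs j, refs (instrs j) (states j), exec (instrs j) (states j)))}

/-- Equation (2): the symbolic trace language over-approximates the concrete one,
hence the symbolic WCET over-approximates the concrete WCET. -/
theorem symbolic_wcet_overapproximates
    (Var D LI : Type) [Fintype Var] [Fintype D] [Fintype LI]
    (pc : Var)
    (lbl : LI → Option D)
    (step : LI → (Var → Option D) → (Var → Option D) → Prop)
    (refs : LI → (Var → Option D) → Finset D)
    (exec : LI → (Var → Option D) → Bool)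
    -- the program: finite set of labelled instructions with pairwise distinct labels
    (P : Finset LI)
    (hlbl : ∀ ι ∈ P, ∀ ι' ∈ P, lbl ι = lbl ι' → ι = ι')
    -- over-approximation hypothesis
    (hover : ∀ ι ∈ P, ∀ s t u : Var → Option D,
      (∀ x, t x = none ∨ t x = s x) → step ι s u →
      ∃ u', step ι t u' ∧ (∀ x, u' x = none ∨ u' x = u x) ∧ u' pc = u pc ∧
        refs ι t = refs ι s ∧ exec ι t = exec ι s)
    -- finite set of initial states, dominated by the symbolic initial state t₀
    (I : Set (Var → Option D)) (hI : I.Finite)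
    (t₀ : Var → Option D)
    (ht₀ : ∀ s₀ ∈ I, (∀ x, t₀ x = none ∨ t₀ x = s₀ x) ∧ t₀ pc = s₀ pc)
    -- final pc-values
    (F : Set (Option D)) :
    TraceLangFrom pc lbl step refs exec P I F
        ⊆ TraceLangFrom pc lbl step refs exec P {t₀} F ∧
    ∀ time : List (LI × Finset D × Bool) → ℕ,
      (TraceLangFrom pc lbl step refs exec P I F).Nonempty →
      (TraceLangFrom pc lbl step refs exec P {t₀} F).Finite →
      sSup (time '' TraceLangFrom pc lbl step refs exec P I F)
        ≤ sSup (time '' TraceLangFrom pc lbl step refs exec P {t₀} F) := by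
  have hsub : TraceLangFrom pc lbl step refs exec P I F
      ⊆ TraceLangFrom pc lbl step refs exec P {t₀} F := by
    rintro w ⟨k, states, instrs, hsteps, hinit, hfin, hw⟩
    classical
    set T : ℕ → (Var → Option D) := fun j => Nat.rec t₀ (fun j tj =>
      if h : ∃ u', step (instrs j) tj u' ∧ (∀ x, u' x = none ∨ u' x = states (j+1) x) ∧
          u' pc = states (j+1) pc then h.choose else states (j+1)) j with hT
    have hT0 : T 0 = t₀ := rfl
    have hTsucc : ∀ j, T (j+1) = (if h : ∃ u', step (instrs j) (T j) u' ∧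
        (∀ x, u' x = none ∨ u' x = states (j+1) x) ∧ u' pc = states (j+1) pc
        then h.choose else states (j+1)) := fun j => rfl
    have key : ∀ j, j ≤ k → (∀ x, T j x = none ∨ T j x = states j x) ∧ T j pc = states j pc := by
      intro j
      induction j with
      | zero => intro _; exact ht₀ (states 0) hinit
      | succ j ih =>
        intro hjk
        have hjk' : j < k := Nat.lt_of_succ_le hjk
        obtain ⟨href, hpc⟩ := ih (Nat.le_of_lt hjk')
        obtain ⟨hmem, _, hstep⟩ := hsteps j hjk'
        obtain ⟨u', hu1, hu2, hu3, _, _⟩ :=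
          hover (instrs j) hmem (states j) (T j) (states (j+1)) href hstep
        have hex : ∃ u', step (instrs j) (T j) u' ∧
            (∀ x, u' x = none ∨ u' x = states (j+1) x) ∧ u' pc = states (j+1) pc :=
          ⟨u', hu1, hu2, hu3⟩
        rw [hTsucc j, dif_pos hex]
        exact ⟨hex.choose_spec.2.1, hex.choose_spec.2.2⟩
    refine ⟨k, T, instrs, ?_, rfl, ?_, ?_⟩
    · intro j hjk
      obtain ⟨hmem, hl, hstep⟩ := hsteps j hjk
      obtain ⟨href, hpc⟩ := key j (Nat.le_of_lt hjk)
      refine ⟨hmem, by rw [hl, hpc], ?_⟩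
      obtain ⟨u', hu1, hu2, hu3, _, _⟩ :=
        hover (instrs j) hmem (states j) (T j) (states (j+1)) href hstep
      have hex : ∃ u', step (instrs j) (T j) u' ∧
          (∀ x, u' x = none ∨ u' x = states (j+1) x) ∧ u' pc = states (j+1) pc :=
        ⟨u', hu1, hu2, hu3⟩
      rw [hTsucc j, dif_pos hex]
      exact hex.choose_spec.1
    · rw [(key k le_rfl).2]; exact hfin
    · rw [hw]
      refine congrArg _ (funext fun j => ?_)
      obtain ⟨hmem, _, hstep⟩ := hsteps j j.2
      obtain ⟨href, _⟩ := key j (Nat.le_of_lt j.2)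
      obtain ⟨u', _, _, _, hr, he⟩ :=
        hover (instrs j) hmem (states j) (T j) (states (j+1)) href hstep
      simp [hr, he]
  refine ⟨hsub, fun time hne hfinB => ?_⟩
  exact csSup_le_csSup ((hfinB.image time).bddAbove) (hne.image time)
    (Set.image_mono hsub)
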